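/- In every finite sequential game, any pair of strategy profiles satisfying the Improvement and Atomicity properties also satisfies the Laziness, One Player, and Subgame Improvement properties; consequently, all X-dynamics with {I,A} ⊆ X ⊆ {I, SI, A, L, 1P} coincide with the {I,A}-dynamics. -/

import Mathlib

namespace SeqGame

inductive GameTree (N O : Type) : Type where
  | leaf (o : O) : GameTree N O
  | node (i : N) (children : List (GameTree N O)) : GameTree N O

namespace GameTree

variable {N O : Type}

/-- The subtree of `T` at position `p` (a list of child indices), if it exists. -/
def subtree : GameTree N O → List ℕ → Option (GameTree N O)
  | t, [] => some t
  | leaf _, _ :: _ => none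
  | node _ c, k :: p =>
    match getElem? c k with
    | some t => subtree t p
    | none => none

/-- A strategy profile: a choice of a child index at every position. -/
abbrev Profile := List ℕ → ℕ

/-- A profile is legal if it chooses an existing child at every internal node. -/
def Legal (T : GameTree N O) (s : Profile) : Prop :=
  ∀ p i c, T.subtree p = some (node i c) → s p < c.length

/-- The profiles `s` and `s'` differ at the (valid, internal) node `p`. -/
def Differs (T : GameTree N O) (s s' : Profile) (p : List ℕ) : Prop :=
  (∃ i c, T.subtree p = some (node i c)) ∧ s p ≠ s' p

/-- The outcome reached when playing according to the profile `s`. -/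
def outcome : GameTree N O → Profile → Option O
  | leaf o, _ => some o
  | node _ c, s =>
    match h : getElem? c (s []) with
    | some t => outcome t (fun p => s (s [] :: p))
    | none => none
decreasing_by
  have hm : t ∈ c := by
    exact List.mem_of_getElem? h
  have := List.sizeOf_lt_of_mem hm
  simp only [node.sizeOf_spec]
  omega

/-- The profile `s` re-rooted at position `p`. -/
def shift (s : Profile) (p : List ℕ) : Profile := fun q => s (p ++ q)

/-- The owner of the node at position `p`, if it is internal. -/
def ownerAt (T : GameTree N O) (p : List ℕ) : Option N :=
  match T.subtree p with
  | some (node i _) => some i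
  | _ => none

/-- `p` lies along the play induced by `s`. -/
def OnPlay (s : Profile) (p : List ℕ) : Prop :=
  ∀ q k, (q ++ [k]) <+: p → s q = k

/-- Improvement property: every player who changes strictly improves the outcome. -/
def Iprop (T : GameTree N O) (pref : N → O → O → Prop) (s s' : Profile) : Prop :=
  ∀ p i c, T.subtree p = some (node i c) → s p ≠ s' p →
    ∃ x y, T.outcome s = some x ∧ T.outcome s' = some y ∧ pref i x y

/-- Subgame improvement property. -/
def SIprop (T : GameTree N O) (pref : N → O → O → Prop) (s s' : Profile) : Prop :=
  ∀ p i c, T.subtree p = some (node i c) → s p ≠ s' p →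
    ∃ x y, outcome (node i c) (shift s p) = some x ∧
      outcome (node i c) (shift s' p) = some y ∧ pref i x y

/-- Laziness property: all changed nodes lie along the play induced by `s'`. -/
def Lprop (T : GameTree N O) (s s' : Profile) : Prop :=
  ∀ p, Differs T s s' p → OnPlay s' p

/-- One player property: at most one player changes his strategy. -/
def P1prop (T : GameTree N O) (s s' : Profile) : Prop :=
  ∃ i : N, ∀ p, Differs T s s' p → T.ownerAt p = some i

/-- Atomicity property: at most one node changes. -/
def Aprop (T : GameTree N O) (s s' : Profile) : Prop :=
  ∀ p q, Differs T s s' p → Differs T s s' q → p = q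

/-- Names of the update properties. -/
inductive Upd : Type | I | SI | L | P1 | A
deriving DecidableEq

/-- Interpretation of an update property name. -/
def holds (T : GameTree N O) (pref : N → O → O → Prop) : Upd → Profile → Profile → Prop
  | .I => Iprop T pref
  | .SI => SIprop T pref
  | .L => Lprop T
  | .P1 => P1prop T
  | .A => Aprop T

/-- The X-dynamics: an actual update (between legal profiles) satisfying
all properties in `X`. -/
def XDyn (X : Set Upd) (T : GameTree N O) (pref : N → O → O → Prop)
    (s s' : Profile) : Prop :=
  Legal T s ∧ Legal T s' ∧ (∃ p, Differs T s s' p) ∧ ∀ u ∈ X, holds T pref u s s'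

/-- A dynamics terminates iff there is no infinite update sequence. -/
def Terminates (D : Profile → Profile → Prop) : Prop :=
  ¬ ∃ f : ℕ → Profile, ∀ n, D (f n) (f (n + 1))

/-- `s'` is a deviation from `s` by the coalition `I`. -/
def Deviation (T : GameTree N O) (I : Set N) (s s' : Profile) : Prop :=
  Legal T s' ∧ ∀ p i c, T.subtree p = some (node i c) → i ∉ I → s p = s' p

/-- Nash equilibrium. -/
def IsNE (T : GameTree N O) (pref : N → O → O → Prop) (s : Profile) : Prop :=
  ∀ i s', Deviation T {i} s s' →
    ∀ x y, T.outcome s = some x → T.outcome s' = some y → ¬ pref i x y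

/-- Subgame perfect equilibrium: an NE in every subgame. -/
def IsSPE (T : GameTree N O) (pref : N → O → O → Prop) (s : Profile) : Prop :=
  ∀ p t, T.subtree p = some t → IsNE t pref (shift s p)

/-- Strong Nash equilibrium (Aumann). -/
def IsSNE (T : GameTree N O) (pref : N → O → O → Prop) (s : Profile) : Prop :=
  ∀ I : Set N, I.Nonempty → ∀ s', Deviation T I s s' →
    ∃ i ∈ I, ∀ x y, T.outcome s = some x → T.outcome s' = some y → ¬ pref i x y

/-- A relation is acyclic if it has no cycle. -/
def Acyclic (r : O → O → Prop) : Prop := ∀ x, ¬ Relation.TransGen r x x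

/-- Incomparability. -/
def Incomp (r : O → O → Prop) (x y : O) : Prop := ¬ r x y ∧ ¬ r y x

/-- Strict weak order: irreflexive, transitive, with transitive incomparability. -/
def IsSWO (r : O → O → Prop) : Prop :=
  (∀ x, ¬ r x x) ∧ (∀ x y z, r x y → r y z → r x z) ∧
    (∀ x y z, Incomp r x y → Incomp r y z → Incomp r x z)

/-- Strict linear order: irreflexive, transitive and total. -/
def IsSLO (r : O → O → Prop) : Prop :=
  (∀ x, ¬ r x x) ∧ (∀ x y z, r x y → r y z → r x z) ∧
    (∀ x y, x ≠ y → r x y ∨ r y x)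

/-- Absence of the main pattern. -/
def OutOfMainPattern (pref : N → O → O → Prop) : Prop :=
  ∀ (i j : N) (x y z : O),
    ¬ (pref i x y ∧ pref i y z ∧ pref j y z ∧ pref j z x)

/-- Absence of the secondary pattern. -/
def OutOfSecondaryPattern (pref : N → O → O → Prop) : Prop :=
  ∀ (i j : N) (w x y z : O),
    ¬ (pref i w x ∧ pref i x y ∧ pref i y z ∧
       Incomp (pref j) x z ∧ pref j z w ∧ Incomp (pref j) w y)

/-- Absence of both patterns. -/
def OutOfPattern (pref : N → O → O → Prop) : Prop :=
  OutOfMainPattern pref ∧ OutOfSecondaryPattern pref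

/-- The preferences can be layered: there is an ordered partition of the
outcomes (given by a layer-index function) such that higher layers are
unanimously weakly preferred, and within a layer no two players agree on
one pair while disagreeing on another pair. -/
def CanBeLayered (pref : N → O → O → Prop) : Prop :=
  ∃ ℓ : O → ℕ,
    (∀ x y, ℓ x < ℓ y → ∀ i, ¬ pref i y x) ∧
    (∀ (i j : N) (w x y z : O), ℓ w = ℓ x → ℓ x = ℓ y → ℓ y = ℓ z →
      ¬ (pref i x y ∧ pref j x y ∧ pref i w z ∧ pref j z w))

end GameTree
end SeqGame


namespace SeqGame.GameTree

variable {N O : Type}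

theorem myInd {P : GameTree N O → Prop} (hl : ∀ o, P (leaf o))
    (hn : ∀ i c, (∀ t ∈ c, P t) → P (node i c)) : ∀ t, P t := by
  have key : ∀ n (t : GameTree N O), sizeOf t ≤ n → P t := by
    intro n
    induction n with
    | zero => intro t h; cases t <;> simp at h
    | succ n ih =>
      intro t h
      cases t with
      | leaf o => exact hl o
      | node i c =>
        refine hn i c (fun t ht => ih t ?_)
        have := List.sizeOf_lt_of_mem ht
        simp only [node.sizeOf_spec] at h
        omega
  exact fun t => key (sizeOf t) t le_rfl

theorem subtree_nil (t : GameTree N O) : t.subtree [] = some t := by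
  cases t <;> rfl

theorem outcome_leaf (o : O) (s : Profile) : outcome (N := N) (leaf o) s = some o := by
  rw [outcome.eq_def]

theorem outcome_node (i : N) (c : List (GameTree N O)) (s : Profile) :
    outcome (node i c) s = match getElem? c (s []) with
      | some t => outcome t (fun p => s (s [] :: p))
      | none => none := by
  rw [outcome]
  rcases hg : getElem? c (s []) with _ | t <;> simp only [hg]

theorem onPlay_nil (s : Profile) : OnPlay s ([] : List ℕ) := by
  intro q k h
  have := h.length_le
  simp at this

theorem onPlay_cons {s : Profile} {k : ℕ} {p : List ℕ} :
    OnPlay s (k :: p) ↔ s [] = k ∧ OnPlay (fun q => s (k :: q)) p := by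
  constructor
  · intro h
    refine ⟨h [] k ⟨p, rfl⟩, fun q k' hq => h (k :: q) k' ?_⟩
    obtain ⟨r, hr⟩ := hq
    exact ⟨r, by simp [← hr]⟩
  · rintro ⟨h0, h⟩ q k' hq
    match q with
    | [] =>
      obtain ⟨r, hr⟩ := hq
      simp at hr
      rw [h0, hr.1]
    | a :: q' =>
      obtain ⟨r, hr⟩ := hq
      simp at hr
      obtain ⟨rfl, hr⟩ := hr
      exact h q' k' ⟨r, by simpa using hr⟩

theorem subtree_append (T : GameTree N O) (p q : List ℕ) :
    T.subtree (p ++ q) = (T.subtree p).bind (fun t => t.subtree q) := by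
  induction p generalizing T with
  | nil => simp [subtree]
  | cons k p ih =>
    cases T with
    | leaf o => simp [subtree]
    | node i c =>
      simp only [List.cons_append, subtree]
      cases h : getElem? c k with
      | some t => simp [ih]
      | none => simp

theorem subtree_prefix_node {T : GameTree N O} {p q : List ℕ} {k : ℕ} {t : GameTree N O}
    (hT : T.subtree p = some t) (hq : (q ++ [k]) <+: p) :
    ∃ i c, T.subtree q = some (node i c) := by
  obtain ⟨r, hr⟩ := hq
  rw [← hr, List.append_assoc, subtree_append] at hT
  cases h : T.subtree q with
  | none => rw [h] at hT; simp at hT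
  | some t' =>
    rw [h] at hT
    cases t' with
    | leaf o => simp [subtree] at hT
    | node i c => exact ⟨i, c, rfl⟩

theorem outcome_congr : ∀ (T : GameTree N O) (s s' : Profile),
    (∀ q i c, T.subtree q = some (node i c) → OnPlay s q → s q = s' q) →
    T.outcome s = T.outcome s' := by
  intro T
  induction T using myInd with
  | hl o => intro s s' _; rw [outcome_leaf, outcome_leaf]
  | hn i c ih =>
    intro s s' h
    have h0 : s [] = s' [] := h [] i c (subtree_nil _) (onPlay_nil s)
    rw [outcome_node, outcome_node, ← h0]
    cases hg : getElem? c (s []) with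
    | none => simp [hg]
    | some t =>
      simp only [hg]
      refine ih t (List.mem_of_getElem? hg) _ _ ?_
      intro q i' c' hq hop
      have hv : (node i c).subtree (s [] :: q) = some (node i' c') := by
        simp only [subtree, hg]; exact hq
      have hpl : OnPlay s (s [] :: q) := onPlay_cons.mpr ⟨rfl, hop⟩
      exact h (s [] :: q) i' c' hv hpl

theorem outcome_on_play : ∀ (p : List ℕ) (T t : GameTree N O) (s : Profile),
    T.subtree p = some t → OnPlay s p → T.outcome s = t.outcome (shift s p) := by
  intro p
  induction p with
  | nil =>
    intro T t s hT _
    rw [subtree_nil] at hT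
    obtain rfl := Option.some_inj.mp hT
    have : shift s [] = s := by funext q; simp [shift]
    rw [this]
  | cons k p ih =>
    intro T t s hT hop
    cases T with
    | leaf o => simp [subtree] at hT
    | node i c =>
      obtain ⟨h0, hop'⟩ := onPlay_cons.mp hop
      simp only [subtree] at hT
      cases hg : getElem? c k with
      | none => simp only [hg] at hT; exact nomatch hT
      | some t' =>
        simp only [hg] at hT
        rw [outcome_node, h0]
        simp only [hg]
        have hsh : shift (fun q => s (k :: q)) p = shift s (k :: p) := by
          funext q; simp [shift]
        rw [← hsh]
        exact ih t' t _ hT hop'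

end SeqGame.GameTree

open SeqGame GameTree in
/-- Improvement + Atomicity imply Laziness, One Player and Subgame Improvement;
consequently all X-dynamics with {I,A} ⊆ X coincide with the {I,A}-dynamics. -/
theorem stmt_7 {N O : Type} [Nonempty N] (T : GameTree N O)
    (pref : N → O → O → Prop) (hirr : ∀ i x, ¬ pref i x x) :
    (∀ s s', Iprop T pref s s' → Aprop T s s' →
      Lprop T s s' ∧ P1prop T s s' ∧ SIprop T pref s s') ∧
    (∀ X : Set Upd, Upd.I ∈ X → Upd.A ∈ X →
      ∀ s s', XDyn X T pref s s' ↔ XDyn {Upd.I, Upd.A} T pref s s') := by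
  have part1 : ∀ s s', Iprop T pref s s' → Aprop T s s' →
      Lprop T s s' ∧ P1prop T s s' ∧ SIprop T pref s s' := by
    intro s s' hI hA
    have hL : Lprop T s s' := by
      intro p hd
      by_contra hnp
      have heq : T.outcome s' = T.outcome s := by
        apply outcome_congr
        intro q i c hq hop
        by_contra hne
        have e := hA p q hd ⟨⟨i, c, hq⟩, Ne.symm hne⟩
        exact hnp (by rw [e]; exact hop)
      obtain ⟨i, c, hp⟩ := hd.1
      obtain ⟨x, y, hx, hy, hxy⟩ := hI p i c hp hd.2
      rw [heq, hx] at hy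
      exact hirr i x (Option.some_inj.mp hy ▸ hxy)
    have h1P : P1prop T s s' := by
      by_cases hd : ∃ p, Differs T s s' p
      · obtain ⟨p, hp⟩ := hd
        obtain ⟨i, c, hpc⟩ := hp.1
        refine ⟨i, fun q hq => ?_⟩
        have e := hA q p hq hp
        rw [e]
        simp [ownerAt, hpc]
      · exact ⟨Classical.arbitrary N, fun p hp => absurd ⟨p, hp⟩ hd⟩
    refine ⟨hL, h1P, ?_⟩
    intro p i c hp hne
    have hdp : Differs T s s' p := ⟨⟨i, c, hp⟩, hne⟩
    have hops' : OnPlay s' p := hL p hdp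
    have hops : OnPlay s p := by
      intro q k hq
      have hk := hops' q k hq
      by_contra hne'
      have hvq := subtree_prefix_node hp hq
      have hd : Differs T s s' q := ⟨hvq, fun h => hne' (h.trans hk)⟩
      have e := hA p q hdp hd
      obtain ⟨r, hr⟩ := hq
      rw [← e] at hr
      have := congrArg List.length hr
      simp at this
    obtain ⟨x, y, hx, hy, hxy⟩ := hI p i c hp hne
    refine ⟨x, y, ?_, ?_, hxy⟩
    · rw [← outcome_on_play p T _ s hp hops]; exact hx
    · rw [← outcome_on_play p T _ s' hp hops']; exact hy
  refine ⟨part1, ?_⟩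
  intro X hIX hAX s s'
  constructor
  · rintro ⟨l1, l2, hd, hall⟩
    refine ⟨l1, l2, hd, fun u hu => ?_⟩
    rcases hu with rfl | hu
    · exact hall _ hIX
    · simp only [Set.mem_singleton_iff] at hu
      subst hu
      exact hall _ hAX
  · rintro ⟨l1, l2, hd, hall⟩
    have hI := hall .I (by simp)
    have hA := hall .A (by simp)
    obtain ⟨hL', h1', hS'⟩ := part1 s s' hI hA
    refine ⟨l1, l2, hd, fun u _ => ?_⟩
    cases u with
    | I => exact hI
    | A => exact hA
    | L => exact hL'
    | P1 => exact h1'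
    | SI => exact hS'
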